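/- For the closed dust FLRW solution a(η) = a₀(1 − cos η), τ − τ_c = a₀(η − sin η), the boundary-effect mode δV_B = −(δB/2)·a₀³(1 − cos η)·(4(1 − cos η) + sin η(sin η − 3η)) satisfies, as a function of τ, the equation δE' = (1/a² − 3(ȧ/a)²)·δV_B + 2(ȧ/a)·δV̇_B with δE' = −a·δB, i.e., −a·δB = (1/a² − 3(ȧ/a)²)δV_B + 2(ȧ/a)δV̇_B. -/

import Mathlib

open Real Set

lemma strictMono_sub_sin : StrictMono (fun x : ℝ => x - Real.sin x) := by
  intro x y hxy
  have hd : 0 < (y - x) / 2 := by linarith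
  have habs : |Real.sin ((y - x) / 2)| < (y - x) / 2 := by
    rcases le_or_gt π ((y - x) / 2) with h | h
    · have h1 : |Real.sin ((y - x) / 2)| ≤ 1 := Real.abs_sin_le_one _
      have := Real.pi_gt_three
      linarith
    · have hs0 : 0 ≤ Real.sin ((y - x) / 2) :=
        Real.sin_nonneg_of_nonneg_of_le_pi hd.le h.le
      rw [abs_of_nonneg hs0]
      exact Real.sin_lt hd
  have key : Real.sin y - Real.sin x < y - x := by
    rw [Real.sin_sub_sin]
    have h1 : |Real.cos ((y + x) / 2)| ≤ 1 := Real.abs_cos_le_one _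
    have h2 : Real.sin ((y - x) / 2) * Real.cos ((y + x) / 2)
        ≤ |Real.sin ((y - x) / 2)| * |Real.cos ((y + x) / 2)| := by
      calc Real.sin ((y - x) / 2) * Real.cos ((y + x) / 2)
          ≤ |Real.sin ((y - x) / 2) * Real.cos ((y + x) / 2)| := le_abs_self _
        _ = |Real.sin ((y - x) / 2)| * |Real.cos ((y + x) / 2)| := abs_mul _ _
    have h3 : |Real.sin ((y - x) / 2)| * |Real.cos ((y + x) / 2)|
        ≤ |Real.sin ((y - x) / 2)| := by
      nlinarith [abs_nonneg (Real.sin ((y - x) / 2))]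
    nlinarith
  simp only
  linarith

lemma trig_id (u s c : ℝ) (h : s ^ 2 + c ^ 2 = 1) :
    ((1 - c) ^ 2 - 3 * s ^ 2) * ((1 - c) * (4 * (1 - c) + s * (s - 3 * u)))
      + 2 * s * (1 - c) *
        (s * (4 * (1 - c) + s * (s - 3 * u))
          + (1 - c) * (4 * s + (c * (s - 3 * u) + s * (c - 3))))
      = 2 * (1 - c) ^ 5 := by
  linear_combination (-2 + 6 * c - 6 * c ^ 2 + 2 * c ^ 3 - s ^ 2 + s ^ 2 * c
      + 3 * u * s - 3 * u * s * c) * h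

/-- For the closed dust FLRW solution, the boundary-effect mode
`δV_B = −(δB/2) a₀³ (1 − cos η)(4(1 − cos η) + sin η (sin η − 3η))`
satisfies, as a function of `τ`,
`−a δB = (1/a² − 3(ȧ/a)²) δV_B + 2(ȧ/a) δV̇_B`. -/
theorem closed_boundary_mode
    (a₀ τc t₁ t₂ δB : ℝ) (ha₀ : 0 < a₀) (η a VB : ℝ → ℝ)
    (hrange : ∀ τ ∈ Ioo t₁ t₂, η τ ∈ Ioo 0 (2 * π))
    (hsin : ∀ τ ∈ Ioo t₁ t₂, Real.sin (η τ) ≠ 0)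
    (hrel : ∀ τ ∈ Ioo t₁ t₂, τ - τc = a₀ * (η τ - Real.sin (η τ)))
    (ha : ∀ τ ∈ Ioo t₁ t₂, a τ = a₀ * (1 - Real.cos (η τ)))
    (hVB : ∀ τ ∈ Ioo t₁ t₂,
      VB τ = -(δB / 2) * a₀ ^ 3 * (1 - Real.cos (η τ))
        * (4 * (1 - Real.cos (η τ))
           + Real.sin (η τ) * (Real.sin (η τ) - 3 * η τ))) :
    ∀ τ ∈ Ioo t₁ t₂,
      -(a τ) * δB = (1 / (a τ) ^ 2 - 3 * (deriv a τ / a τ) ^ 2) * VB τ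
           + 2 * (deriv a τ / a τ) * deriv VB τ := by
  intro τ₀ hτ₀
  set u := η τ₀ with hu
  set s := Real.sin u with hs'
  set c := Real.cos u with hc'
  have hs : s ≠ 0 := hsin τ₀ hτ₀
  have pyth : s ^ 2 + c ^ 2 = 1 := Real.sin_sq_add_cos_sq u
  have hs2 : 0 < s ^ 2 := lt_of_le_of_ne (sq_nonneg s) (Ne.symm (pow_ne_zero 2 hs))
  have hc1 : c < 1 := by nlinarith [Real.cos_le_one u, Real.neg_one_le_cos u]
  have h1c : (0 : ℝ) < 1 - c := by linarith
  have ha₀' : a₀ ≠ 0 := ne_of_gt ha₀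
  have h1c' : (1 : ℝ) - c ≠ 0 := ne_of_gt h1c
  -- the change of variable function
  set f : ℝ → ℝ := fun x => a₀ * (x - Real.sin x) + τc with hf'
  have hfd : HasStrictDerivAt f (a₀ * (1 - c)) u := by
    have h := (((hasStrictDerivAt_id u).sub (Real.hasStrictDerivAt_sin u)).const_mul
      a₀).add_const τc
    convert h using 1 <;> rfl
  have hne : a₀ * (1 - c) ≠ 0 := ne_of_gt (mul_pos ha₀ h1c)
  have hmono : StrictMono f := by
    have h1 : StrictMono (fun x : ℝ => a₀ * (x - Real.sin x)) :=
      strictMono_sub_sin.const_mul ha₀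
    exact h1.add_const τc
  have hfu : f u = τ₀ := by
    have h := hrel τ₀ hτ₀
    simp only [hf']
    linarith
  have hev : ∀ᶠ x in nhds u, η (f x) = x := by
    have hIoo : Ioo t₁ t₂ ∈ nhds (f u) := by
      rw [hfu]; exact isOpen_Ioo.mem_nhds hτ₀
    have hmem : ∀ᶠ x in nhds u, f x ∈ Ioo t₁ t₂ :=
      hfd.hasDerivAt.continuousAt hIoo
    filter_upwards [hmem] with x hx
    have h2 := hrel (f x) hx
    refine hmono.injective ?_
    simp only [hf'] at h2 ⊢
    linarith
  have hη : HasDerivAt η (a₀ * (1 - c))⁻¹ τ₀ := by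
    have h := hfd.to_local_left_inverse hne hev
    rw [hfu] at h
    exact h.hasDerivAt
  have hIoo : Ioo t₁ t₂ ∈ nhds τ₀ := isOpen_Ioo.mem_nhds hτ₀
  -- derivative of a
  have haD : HasDerivAt a ((a₀ * s) * (a₀ * (1 - c))⁻¹) τ₀ := by
    have h1 : HasDerivAt (fun x => a₀ * (1 - Real.cos x)) (a₀ * s) u := by
      have h := ((Real.hasDerivAt_cos u).const_sub 1).const_mul a₀
      exact h.congr_deriv (by rw [hs']; ring)
    have h2 := h1.comp τ₀ hη
    refine h2.congr_of_eventuallyEq ?_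
    filter_upwards [hIoo] with x hx
    exact ha x hx
  have da : deriv a τ₀ = (a₀ * s) * (a₀ * (1 - c))⁻¹ := haD.deriv
  -- derivative of VB
  have hcosD := Real.hasDerivAt_cos u
  have hsinD := Real.hasDerivAt_sin u
  have h1 : HasDerivAt (fun x => 1 - Real.cos x) s u := by
    have h := hcosD.const_sub 1
    exact h.congr_deriv (by rw [hs']; ring)
  have h2 : HasDerivAt (fun x => Real.sin x - 3 * x) (c - 3) u := by
    have h := hsinD.sub ((hasDerivAt_id u).const_mul 3)
    exact h.congr_deriv (by rw [hc']; ring)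
  have h3 : HasDerivAt (fun x => 4 * (1 - Real.cos x) + Real.sin x * (Real.sin x - 3 * x))
      (4 * s + (c * (s - 3 * u) + s * (c - 3))) u := by
    have h := (h1.const_mul 4).add (hsinD.mul h2)
    convert h using 1 <;> rfl
  have h4 : HasDerivAt
      (fun x => -(δB / 2) * a₀ ^ 3 *
        ((1 - Real.cos x) * (4 * (1 - Real.cos x) + Real.sin x * (Real.sin x - 3 * x))))
      (-(δB / 2) * a₀ ^ 3 *
        (s * (4 * (1 - c) + s * (s - 3 * u))
          + (1 - c) * (4 * s + (c * (s - 3 * u) + s * (c - 3))))) u :=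
    (h1.mul h3).const_mul (-(δB / 2) * a₀ ^ 3)
  have hVBD : HasDerivAt VB
      ((-(δB / 2) * a₀ ^ 3 *
        (s * (4 * (1 - c) + s * (s - 3 * u))
          + (1 - c) * (4 * s + (c * (s - 3 * u) + s * (c - 3))))) * (a₀ * (1 - c))⁻¹) τ₀ := by
    have h5 := h4.comp τ₀ hη
    refine h5.congr_of_eventuallyEq ?_
    filter_upwards [hIoo] with x hx
    simp only [Function.comp_apply]
    rw [hVB x hx]
    ring
  have dV : deriv VB τ₀ = (-(δB / 2) * a₀ ^ 3 *
      (s * (4 * (1 - c) + s * (s - 3 * u))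
        + (1 - c) * (4 * s + (c * (s - 3 * u) + s * (c - 3))))) * (a₀ * (1 - c))⁻¹ :=
    hVBD.deriv
  rw [hVB τ₀ hτ₀, ha τ₀ hτ₀, da, dV]
  rw [← hu, ← hs', ← hc']
  have key := trig_id u s c pyth
  linear_combination (norm := skip) ((δB / 2) * a₀ ^ 5 / (a₀ * (1 - c)) ^ 4) * key
  field_simp
  ring
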